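/- arXiv:1011.1199 — 2 statements merged into one kernel-verified Lean document; each statement's English description precedes it below -/
import Mathlib

section
/- Consider a birth-death Markov chain on {0,1,…,Q} with stationary distribution π satisfying π_j ≤ π_{j+1} for all 0 ≤ j ≤ Q-1. Then for every function f: {0,…,Q} → ℝ, Var_π(f) ≤ 2Q² ∑_{z=0}^{Q-1} π_z (f(z+1) - f(z))². -/
open Finset

/-- Poincaré inequality for a monotone stationary distribution
of a birth-death chain on `{0,…,Q}`:
`Var_π(f) ≤ 2Q² ∑_{z=0}^{Q-1} π_z (f(z+1)-f(z))²`. -/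
theorem stmt1 (Q : ℕ) (π f : ℕ → ℝ)
    (hpos : ∀ j, 0 ≤ π j)
    (hprob : ∑ j ∈ Finset.range (Q + 1), π j = 1)
    (hmono : ∀ j, j < Q → π j ≤ π (j + 1)) :
    (∑ j ∈ Finset.range (Q + 1), π j * (f j) ^ 2)
      - (∑ j ∈ Finset.range (Q + 1), π j * f j) ^ 2
    ≤ 2 * (Q : ℝ) ^ 2 * ∑ z ∈ Finset.range Q, π z * (f (z + 1) - f z) ^ 2 := by
  have hmono' : ∀ a b : ℕ, a ≤ b → b ≤ Q → π a ≤ π b := by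
    intro a b hab hbQ
    induction b, hab using Nat.le_induction with
    | base => exact le_refl _
    | succ n hn ih =>
        exact (ih (by omega)).trans (hmono n (by omega))
  -- Step 1: Var ≤ ∑ π_j (f j - f Q)^2
  have step1 : (∑ j ∈ Finset.range (Q + 1), π j * (f j) ^ 2)
      - (∑ j ∈ Finset.range (Q + 1), π j * f j) ^ 2
      ≤ ∑ j ∈ Finset.range (Q + 1), π j * (f j - f Q) ^ 2 := by
    have expand : ∑ j ∈ Finset.range (Q + 1), π j * (f j - f Q) ^ 2
        = (∑ j ∈ Finset.range (Q + 1), π j * (f j) ^ 2)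
          - 2 * f Q * (∑ j ∈ Finset.range (Q + 1), π j * f j)
          + (f Q) ^ 2 * (∑ j ∈ Finset.range (Q + 1), π j) := by
      have hterm : ∀ j, π j * (f j - f Q) ^ 2
          = π j * (f j) ^ 2 - 2 * f Q * (π j * f j) + (f Q) ^ 2 * π j := fun j => by ring
      simp only [hterm, Finset.sum_add_distrib, Finset.sum_sub_distrib, ← Finset.mul_sum]
    rw [expand, hprob]
    nlinarith [sq_nonneg ((∑ j ∈ Finset.range (Q + 1), π j * f j) - f Q)]
  -- Step 2: pointwise Cauchy-Schwarz on the telescoping sum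
  have step2 : ∀ j ∈ Finset.range (Q + 1),
      π j * (f j - f Q) ^ 2
      ≤ π j * ((Q : ℝ) * ∑ z ∈ Finset.Ico j Q, (f (z + 1) - f z) ^ 2) := by
    intro j hj
    rw [Finset.mem_range] at hj
    apply mul_le_mul_of_nonneg_left _ (hpos j)
    have htel : f Q - f j = ∑ z ∈ Finset.Ico j Q, (f (z + 1) - f z) := by
      rw [Finset.sum_Ico_eq_sub _ (by omega : j ≤ Q), Finset.sum_range_sub,
        Finset.sum_range_sub]
      ring
    have hcs : (∑ z ∈ Finset.Ico j Q, (f (z + 1) - f z)) ^ 2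
        ≤ ((Finset.Ico j Q).card : ℝ) * ∑ z ∈ Finset.Ico j Q, (f (z + 1) - f z) ^ 2 := by
      exact sq_sum_le_card_mul_sum_sq
    have hcard : ((Finset.Ico j Q).card : ℝ) ≤ (Q : ℝ) := by
      rw [Nat.card_Ico]
      exact_mod_cast Nat.sub_le Q j
    have hsq : (f j - f Q) ^ 2 = (∑ z ∈ Finset.Ico j Q, (f (z + 1) - f z)) ^ 2 := by
      rw [← htel]; ring
    rw [hsq]
    refine hcs.trans (mul_le_mul_of_nonneg_right hcard ?_)
    exact Finset.sum_nonneg fun z _ => sq_nonneg _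
  -- Step 3: swap sums
  have step3 : ∑ j ∈ Finset.range (Q + 1), π j * ∑ z ∈ Finset.Ico j Q, (f (z + 1) - f z) ^ 2
      ≤ (Q : ℝ) * ∑ z ∈ Finset.range Q, π z * (f (z + 1) - f z) ^ 2 := by
    have hrw : ∀ j, π j * ∑ z ∈ Finset.Ico j Q, (f (z + 1) - f z) ^ 2
        = ∑ z ∈ Finset.range Q, (if j ≤ z then π j * (f (z + 1) - f z) ^ 2 else 0) := by
      intro j
      rw [Finset.mul_sum]
      have : Finset.Ico j Q = (Finset.range Q).filter (fun z => j ≤ z) := by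
        ext z; simp [Finset.mem_Ico, Finset.mem_filter, Finset.mem_range]; omega
      rw [this, Finset.sum_filter]
    simp only [hrw]
    rw [Finset.sum_comm]
    rw [Finset.mul_sum]
    apply Finset.sum_le_sum
    intro z hz
    rw [Finset.mem_range] at hz
    have hinner : ∑ j ∈ Finset.range (Q + 1),
        (if j ≤ z then π j * (f (z + 1) - f z) ^ 2 else 0)
        = (∑ j ∈ Finset.range (z + 1), π j) * (f (z + 1) - f z) ^ 2 := by
      rw [Finset.sum_mul, ← Finset.sum_filter]
      congr 1
      ext j; simp [Finset.mem_filter, Finset.mem_range]; omega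
    rw [hinner]
    have hsum : ∑ j ∈ Finset.range (z + 1), π j ≤ (Q : ℝ) * π z := by
      have h1 : ∑ j ∈ Finset.range (z + 1), π j ≤ (z + 1 : ℕ) • π z := by
        have := Finset.sum_le_card_nsmul (Finset.range (z + 1)) π (π z)
          (fun j hj => hmono' j z (by have := Finset.mem_range.mp hj; omega) (by omega))
        rwa [Finset.card_range] at this
      calc ∑ j ∈ Finset.range (z + 1), π j ≤ (z + 1 : ℕ) • π z := h1
        _ = ((z + 1 : ℕ) : ℝ) * π z := by rw [nsmul_eq_mul]
        _ ≤ (Q : ℝ) * π z := by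
            apply mul_le_mul_of_nonneg_right _ (hpos z)
            exact_mod_cast hz
    calc (∑ j ∈ Finset.range (z + 1), π j) * (f (z + 1) - f z) ^ 2
        ≤ ((Q : ℝ) * π z) * (f (z + 1) - f z) ^ 2 :=
          mul_le_mul_of_nonneg_right hsum (sq_nonneg _)
      _ = (Q : ℝ) * (π z * (f (z + 1) - f z) ^ 2) := by ring
  -- combine
  have hnn : 0 ≤ ∑ z ∈ Finset.range Q, π z * (f (z + 1) - f z) ^ 2 :=
    Finset.sum_nonneg fun z _ => mul_nonneg (hpos z) (sq_nonneg _)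
  have hQnn : (0:ℝ) ≤ (Q:ℝ) := Nat.cast_nonneg Q
  calc (∑ j ∈ Finset.range (Q + 1), π j * (f j) ^ 2)
      - (∑ j ∈ Finset.range (Q + 1), π j * f j) ^ 2
      ≤ ∑ j ∈ Finset.range (Q + 1), π j * (f j - f Q) ^ 2 := step1
    _ ≤ ∑ j ∈ Finset.range (Q + 1),
          π j * ((Q : ℝ) * ∑ z ∈ Finset.Ico j Q, (f (z + 1) - f z) ^ 2) :=
        Finset.sum_le_sum step2
    _ = (Q : ℝ) * ∑ j ∈ Finset.range (Q + 1),
          π j * ∑ z ∈ Finset.Ico j Q, (f (z + 1) - f z) ^ 2 := by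
        rw [Finset.mul_sum]; apply Finset.sum_congr rfl; intro j _; ring
    _ ≤ (Q : ℝ) * ((Q : ℝ) * ∑ z ∈ Finset.range Q, π z * (f (z + 1) - f z) ^ 2) :=
        mul_le_mul_of_nonneg_left step3 hQnn
    _ ≤ 2 * (Q : ℝ) ^ 2 * ∑ z ∈ Finset.range Q, π z * (f (z + 1) - f z) ^ 2 := by
        nlinarith [mul_nonneg (mul_nonneg hQnn hQnn) hnn]
end

section
/- (Spectral gap comparison between environment and untagged process, Lemma spec_gap0.) Suppose on configurations with η(0) ≥ 1 and total j particles one has a₁^{-1} ≤ η(0)/g(η(0)) ≤ j·a₀^{-1}. Let W(l,j) and W^{env}(l,j) be the inverse spectral gaps of the zero-range generator 𝓛_{Λ_l} on Σ_{Λ_l,j} and of the environment generator L^{env}_{Λ_l} on Σ*_{Λ_l,j}, respectively (both with symmetric nearest-neighbor p). Then for j ≥ 1: W^{env}(l,j) ≤ (a₁ a₀^{-1} j)² · W(l, j−1). -/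
open Finset

/-- `g(k)! = g(1)⋯g(k)`. -/
noncomputable def gfact (g : ℕ → ℝ) (k : ℕ) : ℝ := ∏ i ∈ Finset.Icc 1 k, g i

/-- Canonical zero-range weight of a configuration. -/
noncomputable def cw (g : ℕ → ℝ) {n : ℕ} (η : Fin n → ℕ) : ℝ :=
  ∏ x, (gfact g (η x))⁻¹

/-- Expectation under the canonical zero-range measure. -/
noncomputable def canE (g : ℕ → ℝ) (n k : ℕ) (f : (Fin n → ℕ) → ℝ) : ℝ :=
  (∑ η ∈ Finset.Nat.antidiagonalTuple n k, cw g η * f η) /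
  (∑ η ∈ Finset.Nat.antidiagonalTuple n k, cw g η)

/-- Expectation under the Palm canonical measure (size-biased at `o`). -/
noncomputable def palmE (g : ℕ → ℝ) (n k : ℕ) (o : Fin n)
    (f : (Fin n → ℕ) → ℝ) : ℝ :=
  (∑ η ∈ Finset.Nat.antidiagonalTuple n k, (η o : ℝ) * cw g η * f η) /
  (∑ η ∈ Finset.Nat.antidiagonalTuple n k, (η o : ℝ) * cw g η)

/-- The configuration obtained by moving a particle from `x` to `y`. -/
def mv {n : ℕ} (η : Fin n → ℕ) (x y : Fin n) : Fin n → ℕ :=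
  fun z => if z = y then η y + 1 else if z = x then η x - 1 else η z

/-- Left endpoint of the `i`-th nearest-neighbor bond of the cube `Λ_l`. -/
def sA (l : ℕ) (i : Fin (2 * l)) : Fin (2 * l + 1) :=
  ⟨i.1, by have := i.2; omega⟩

/-- Right endpoint of the `i`-th nearest-neighbor bond of the cube `Λ_l`. -/
def sB (l : ℕ) (i : Fin (2 * l)) : Fin (2 * l + 1) :=
  ⟨i.1 + 1, by have := i.2; omega⟩

/-- Variance under the canonical measure `μ_{Λ_l,j}`. -/
noncomputable def varMu (g : ℕ → ℝ) (l j : ℕ)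
    (f : (Fin (2 * l + 1) → ℕ) → ℝ) : ℝ :=
  canE g (2 * l + 1) j (fun η => (f η) ^ 2) - (canE g (2 * l + 1) j f) ^ 2

/-- Local Dirichlet contribution of a configuration for the untagged
(symmetric nearest-neighbor, `p(±1) = 1/2`) zero-range dynamics. -/
noncomputable def dloc (g : ℕ → ℝ) (l : ℕ) (η : Fin (2 * l + 1) → ℕ)
    (f : (Fin (2 * l + 1) → ℕ) → ℝ) : ℝ :=
  (1 / 2) * ∑ i : Fin (2 * l),
    ((1 / 2) * g (η (sA l i)) * (f (mv η (sA l i) (sB l i)) - f η) ^ 2 +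
     (1 / 2) * g (η (sB l i)) * (f (mv η (sB l i) (sA l i)) - f η) ^ 2)

/-- Dirichlet form `D(μ_{Λ_l,j}, f)` of the untagged zero-range process. -/
noncomputable def dirMu (g : ℕ → ℝ) (l j : ℕ)
    (f : (Fin (2 * l + 1) → ℕ) → ℝ) : ℝ :=
  (∑ η ∈ Finset.Nat.antidiagonalTuple (2 * l + 1) j, cw g η * dloc g l η f) /
  (∑ η ∈ Finset.Nat.antidiagonalTuple (2 * l + 1) j, cw g η)

/-- Jump rate of the environment process: at the origin a particle leaves at
rate `g(η(0))(η(0)-1)/η(0)`, elsewhere at rate `g(η(x))`. -/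
noncomputable def rEnv (g : ℕ → ℝ) {n : ℕ} (o : Fin n) (η : Fin n → ℕ)
    (x : Fin n) : ℝ :=
  if x = o then g (η x) * (((η x : ℝ) - 1) / (η x)) else g (η x)

/-- Variance under the Palm canonical measure `ν_{Λ_l,j}`. -/
noncomputable def varNu (g : ℕ → ℝ) (l j : ℕ) (o : Fin (2 * l + 1))
    (f : (Fin (2 * l + 1) → ℕ) → ℝ) : ℝ :=
  palmE g (2 * l + 1) j o (fun η => (f η) ^ 2) - (palmE g (2 * l + 1) j o f) ^ 2

/-- Local Dirichlet contribution for the environment dynamics. -/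
noncomputable def dlocEnv (g : ℕ → ℝ) (l : ℕ) (o : Fin (2 * l + 1))
    (η : Fin (2 * l + 1) → ℕ) (f : (Fin (2 * l + 1) → ℕ) → ℝ) : ℝ :=
  (1 / 2) * ∑ i : Fin (2 * l),
    ((1 / 2) * rEnv g o η (sA l i) * (f (mv η (sA l i) (sB l i)) - f η) ^ 2 +
     (1 / 2) * rEnv g o η (sB l i) * (f (mv η (sB l i) (sA l i)) - f η) ^ 2)

/-- Dirichlet form `D(ν_{Λ_l,j}, f)` of the environment process. -/
noncomputable def dirNu (g : ℕ → ℝ) (l j : ℕ) (o : Fin (2 * l + 1))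
    (f : (Fin (2 * l + 1) → ℕ) → ℝ) : ℝ :=
  (∑ η ∈ Finset.Nat.antidiagonalTuple (2 * l + 1) j,
      (η o : ℝ) * cw g η * dlocEnv g l o η f) /
  (∑ η ∈ Finset.Nat.antidiagonalTuple (2 * l + 1) j, (η o : ℝ) * cw g η)


section SpecGapAux

open Finset

/-- Add one particle at site `o`. -/
noncomputable def addo {n : ℕ} (o : Fin n) (η : Fin n → ℕ) : Fin n → ℕ :=
  Function.update η o (η o + 1)

lemma addo_apply {n : ℕ} (o : Fin n) (η : Fin n → ℕ) (z : Fin n) :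
    addo o η z = if z = o then η o + 1 else η z := Function.update_apply ..

lemma sum_addo {n : ℕ} (o : Fin n) (η : Fin n → ℕ) :
    ∑ x, addo o η x = (∑ x, η x) + 1 := by
  classical
  rw [addo, Finset.sum_update_of_mem (Finset.mem_univ o),
    Finset.sdiff_singleton_eq_erase, ← Finset.add_sum_erase _ η (Finset.mem_univ o)]
  omega

lemma gfact_succ (g : ℕ → ℝ) (k : ℕ) : gfact g (k + 1) = gfact g k * g (k + 1) :=
  Finset.prod_Icc_succ_top (Nat.succ_le_succ (Nat.zero_le k)) g

lemma gfact_pos {g : ℕ → ℝ} (hgpos : ∀ m : ℕ, 1 ≤ m → 0 < g m) (k : ℕ) :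
    0 < gfact g k :=
  Finset.prod_pos fun i hi => hgpos i (Finset.mem_Icc.mp hi).1

lemma cw_pos {g : ℕ → ℝ} (hgpos : ∀ m : ℕ, 1 ≤ m → 0 < g m) {n : ℕ}
    (η : Fin n → ℕ) : 0 < cw g η :=
  Finset.prod_pos fun x _ => inv_pos.mpr (gfact_pos hgpos _)

lemma cw_addo (g : ℕ → ℝ) {n : ℕ} (o : Fin n) (η : Fin n → ℕ) :
    cw g (addo o η) = (g (η o + 1))⁻¹ * cw g η := by
  classical
  unfold cw
  rw [← Finset.mul_prod_erase Finset.univ _ (Finset.mem_univ o),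
      ← Finset.mul_prod_erase Finset.univ (fun x => (gfact g (η x))⁻¹) (Finset.mem_univ o)]
  have h1 : ∏ x ∈ Finset.univ.erase o, (gfact g (addo o η x))⁻¹
      = ∏ x ∈ Finset.univ.erase o, (gfact g (η x))⁻¹ :=
    Finset.prod_congr rfl fun x hx => by
      rw [addo_apply, if_neg (Finset.mem_erase.mp hx).1]
  rw [h1, addo_apply, if_pos rfl, gfact_succ, mul_inv]
  ring

lemma mv_addo {n : ℕ} (o x y : Fin n) (η : Fin n → ℕ) (hxy : x ≠ y)
    (hx : x = o → 1 ≤ η o) :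
    mv (addo o η) x y = addo o (mv η x y) := by
  classical
  funext z
  simp only [mv, addo_apply]
  by_cases hzy : z = y <;> by_cases hzx : z = x <;> by_cases hzo : z = o <;>
    by_cases hyo : y = o <;> by_cases hxo : x = o <;>
      simp_all <;> omega

/-- Change of variables `η ↦ η - d₀` for size-biased sums. -/
lemma sum_palm (g : ℕ → ℝ) (n j : ℕ) (hj : 1 ≤ j) (o : Fin n)
    (X : (Fin n → ℕ) → ℝ) :
    ∑ η ∈ Finset.Nat.antidiagonalTuple n j, (η o : ℝ) * cw g η * X η
      = ∑ η ∈ Finset.Nat.antidiagonalTuple n (j - 1),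
          ((η o : ℝ) + 1) * cw g (addo o η) * X (addo o η) := by
  classical
  rw [← Finset.sum_filter_of_ne (p := fun η : Fin n → ℕ => 1 ≤ η o)
      (fun η _ hne => Nat.one_le_iff_ne_zero.mpr fun h0 => hne (by simp [h0]))]
  refine Finset.sum_nbij' (fun η => Function.update η o (η o - 1)) (addo o)
    ?_ ?_ ?_ ?_ ?_
  · intro η hη
    rw [Finset.mem_filter, Finset.Nat.mem_antidiagonalTuple] at hη
    rw [Finset.Nat.mem_antidiagonalTuple,
      Finset.sum_update_of_mem (Finset.mem_univ o), Finset.sdiff_singleton_eq_erase]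
    have := Finset.add_sum_erase Finset.univ η (Finset.mem_univ o)
    omega
  · intro η hη
    rw [Finset.Nat.mem_antidiagonalTuple] at hη
    rw [Finset.mem_filter, Finset.Nat.mem_antidiagonalTuple, sum_addo]
    constructor
    · omega
    · rw [addo_apply, if_pos rfl]; omega
  · intro η hη
    rw [Finset.mem_filter] at hη
    funext z
    rw [addo_apply]
    by_cases hz : z = o
    · subst hz; rw [if_pos rfl, Function.update_self]
      have := hη.2; omega
    · rw [if_neg hz, Function.update_of_ne hz]
  · intro η hη
    funext z
    by_cases hz : z = o
    · subst hz; rw [Function.update_self, addo_apply, if_pos rfl]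
      omega
    · rw [Function.update_of_ne hz, addo_apply, if_neg hz]
  · intro η hη
    rw [Finset.mem_filter] at hη
    have hrec : addo o (Function.update η o (η o - 1)) = η := by
      funext z
      rw [addo_apply]
      by_cases hz : z = o
      · subst hz; rw [if_pos rfl, Function.update_self]
        have := hη.2; omega
      · rw [if_neg hz, Function.update_of_ne hz]
    rw [hrec, Function.update_self]
    have h1 : ((η o - 1 : ℕ) : ℝ) + 1 = (η o : ℝ) := by
      have := hη.2
      have : (η o - 1 : ℕ) + 1 = η o := by omega
      exact_mod_cast congrArg (Nat.cast : ℕ → ℝ) this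
    rw [h1]

/-- General weighted-measure variance comparison. -/
lemma var_comp {α : Type*} (S : Finset α) (w v F : α → ℝ) (β K : ℝ)
    (hβ : 0 < β) (hK : 0 ≤ K)
    (hw : ∀ a ∈ S, 0 ≤ w a)
    (h1 : ∀ a ∈ S, β * w a ≤ v a) (h2 : ∀ a ∈ S, v a ≤ K * w a)
    (hZw : 0 < ∑ a ∈ S, w a) :
    (∑ a ∈ S, v a * F a ^ 2) / (∑ a ∈ S, v a)
        - ((∑ a ∈ S, v a * F a) / (∑ a ∈ S, v a)) ^ 2
      ≤ (K / β) * ((∑ a ∈ S, w a * F a ^ 2) / (∑ a ∈ S, w a)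
        - ((∑ a ∈ S, w a * F a) / (∑ a ∈ S, w a)) ^ 2) := by
  classical
  set Zw := ∑ a ∈ S, w a with hZwdef
  set Zv := ∑ a ∈ S, v a with hZvdef
  set c := (∑ a ∈ S, w a * F a) / Zw with hcdef
  have hZv : 0 < Zv := by
    have hle : β * Zw ≤ Zv := by
      rw [hZwdef, hZvdef, Finset.mul_sum]
      exact Finset.sum_le_sum h1
    have := mul_pos hβ hZw
    linarith
  have expand : ∀ u : α → ℝ, ∑ a ∈ S, u a * (F a - c) ^ 2
      = (∑ a ∈ S, u a * F a ^ 2) - 2 * c * (∑ a ∈ S, u a * F a)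
        + c ^ 2 * (∑ a ∈ S, u a) := by
    intro u
    rw [Finset.sum_congr rfl (fun a _ => show u a * (F a - c) ^ 2
        = u a * F a ^ 2 - 2 * c * (u a * F a) + c ^ 2 * u a from by ring),
      Finset.sum_add_distrib, Finset.sum_sub_distrib, ← Finset.mul_sum,
      ← Finset.mul_sum]
  have hwFc : ∑ a ∈ S, w a * F a = c * Zw := by
    rw [hcdef, div_mul_cancel₀ _ hZw.ne']
  have Ew : ∑ a ∈ S, w a * (F a - c) ^ 2
      = (∑ a ∈ S, w a * F a ^ 2) - c ^ 2 * Zw := by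
    rw [expand, hwFc, ← hZwdef]; ring
  have hQw0 : 0 ≤ ∑ a ∈ S, w a * (F a - c) ^ 2 :=
    Finset.sum_nonneg fun a ha => mul_nonneg (hw a ha) (sq_nonneg _)
  have hQvK : ∑ a ∈ S, v a * (F a - c) ^ 2
      ≤ K * ∑ a ∈ S, w a * (F a - c) ^ 2 := by
    rw [Finset.mul_sum]
    refine Finset.sum_le_sum fun a ha => ?_
    rw [← mul_assoc]
    exact mul_le_mul_of_nonneg_right (h2 a ha) (sq_nonneg _)
  set e := (∑ a ∈ S, v a * F a) / Zv with hedef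
  have hvFc : ∑ a ∈ S, v a * F a = e * Zv := by
    rw [hedef, div_mul_cancel₀ _ hZv.ne']
  have step1 : (∑ a ∈ S, v a * F a ^ 2) / Zv - e ^ 2
      ≤ (∑ a ∈ S, v a * (F a - c) ^ 2) / Zv := by
    rw [expand, hvFc, ← hZvdef,
      show (∑ a ∈ S, v a * F a ^ 2) - 2 * c * (e * Zv) + c ^ 2 * Zv
        = (∑ a ∈ S, v a * F a ^ 2) + (- (2 * c * e) + c ^ 2) * Zv from by ring,
      add_div, mul_div_cancel_right₀ _ hZv.ne']
    nlinarith [sq_nonneg (e - c)]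
  have step2 : (∑ a ∈ S, v a * (F a - c) ^ 2) / Zv
      ≤ (K * ∑ a ∈ S, w a * (F a - c) ^ 2) / (β * Zw) := by
    refine div_le_div₀ (mul_nonneg hK hQw0) hQvK (mul_pos hβ hZw) ?_
    rw [hZvdef, Finset.mul_sum]
    exact Finset.sum_le_sum h1
  have step3 : (K * ∑ a ∈ S, w a * (F a - c) ^ 2) / (β * Zw)
      = (K / β) * ((∑ a ∈ S, w a * F a ^ 2) / Zw - c ^ 2) := by
    rw [Ew,
      show (∑ a ∈ S, w a * F a ^ 2) / Zw - c ^ 2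
        = ((∑ a ∈ S, w a * F a ^ 2) - c ^ 2 * Zw) / Zw from by
          rw [sub_div, mul_div_cancel_right₀ _ hZw.ne'],
      ← div_mul_div_comm]
  calc (∑ a ∈ S, v a * F a ^ 2) / Zv - e ^ 2
      ≤ (∑ a ∈ S, v a * (F a - c) ^ 2) / Zv := step1
    _ ≤ (K * ∑ a ∈ S, w a * (F a - c) ^ 2) / (β * Zw) := step2
    _ = (K / β) * ((∑ a ∈ S, w a * F a ^ 2) / Zw - c ^ 2) := step3

end SpecGapAux

section SpecGapMain

open Finset

variable {g : ℕ → ℝ} {a₀ a₁ : ℝ}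

lemma g_nonneg (hg0 : g 0 = 0) (hgpos : ∀ m : ℕ, 1 ≤ m → 0 < g m) :
    ∀ m : ℕ, 0 ≤ g m := by
  intro m
  cases m with
  | zero => simp [hg0]
  | succ k => exact (hgpos _ (Nat.succ_le_succ (Nat.zero_le k))).le

lemma sAB_ne (l : ℕ) (i : Fin (2 * l)) : sA l i ≠ sB l i := by
  intro h
  have := congrArg Fin.val h
  simp [sA, sB] at this

/-- per-bond, per-direction comparison. -/
lemma half_comp (ha₀ : 0 < a₀) (ha : a₀ ≤ a₁)
    (hg0 : g 0 = 0) (hgpos : ∀ m : ℕ, 1 ≤ m → 0 < g m)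
    (j : ℕ)
    (hbound : ∀ m : ℕ, 1 ≤ m → m ≤ j →
      a₁⁻¹ ≤ (m : ℝ) / g m ∧ (m : ℝ) / g m ≤ j * a₀⁻¹)
    {n : ℕ} (o : Fin n) (η : Fin n → ℕ) (hηo : η o + 1 ≤ j)
    (x y : Fin n) (hxy : x ≠ y) (f : (Fin n → ℕ) → ℝ) :
    g (η x) * (f (addo o (mv η x y)) - f (addo o η)) ^ 2
      ≤ (a₁ * (((η o : ℝ) + 1) / g (η o + 1)))
        * (rEnv g o (addo o η) x
          * (f (mv (addo o η) x y) - f (addo o η)) ^ 2) := by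
  have ha₁ : 0 < a₁ := lt_of_lt_of_le ha₀ ha
  have hbm := hbound (η o + 1) (Nat.succ_le_succ (Nat.zero_le _)) hηo
  have hgm : 0 < g (η o + 1) := hgpos _ (Nat.succ_le_succ (Nat.zero_le _))
  have hC1 : 1 ≤ a₁ * (((η o : ℝ) + 1) / g (η o + 1)) := by
    have h := hbm.1
    push_cast at h
    calc (1 : ℝ) = a₁ * a₁⁻¹ := (mul_inv_cancel₀ ha₁.ne').symm
      _ ≤ a₁ * (((η o : ℝ) + 1) / g (η o + 1)) :=
          mul_le_mul_of_nonneg_left h ha₁.le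
  by_cases hxo : x = o
  · subst hxo
    by_cases h0 : η x = 0
    · have h1 : rEnv g x (addo x η) x = 0 := by
        rw [rEnv, if_pos rfl, addo_apply, if_pos rfl, h0]
        norm_num
      rw [h1, h0, hg0]
      simp
    · have h1 : 1 ≤ η x := Nat.one_le_iff_ne_zero.mpr h0
      have hmv : mv (addo x η) x y = addo x (mv η x y) :=
        mv_addo x x y η hxy (fun _ => h1)
      rw [hmv]
      have hr : rEnv g x (addo x η) x
          = g (η x + 1) * ((η x : ℝ) / ((η x : ℝ) + 1)) := by
        rw [rEnv, if_pos rfl, addo_apply, if_pos rfl]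
        push_cast
        ring_nf
      have hkey : (a₁ * (((η x : ℝ) + 1) / g (η x + 1)))
          * (g (η x + 1) * ((η x : ℝ) / ((η x : ℝ) + 1))) = a₁ * η x := by
        have hne : ((η x : ℝ) + 1) ≠ 0 := by positivity
        field_simp
      have hglex : g (η x) ≤ a₁ * η x := by
        have hb := (hbound (η x) h1 (by omega)).1
        have hgx : 0 < g (η x) := hgpos _ h1
        rw [le_div_iff₀ hgx] at hb
        have h2 := mul_le_mul_of_nonneg_left hb ha₁.le
        rw [← mul_assoc, mul_inv_cancel₀ ha₁.ne', one_mul] at h2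
        exact h2
      calc g (η x) * (f (addo x (mv η x y)) - f (addo x η)) ^ 2
          ≤ (a₁ * (η x : ℝ)) * (f (addo x (mv η x y)) - f (addo x η)) ^ 2 :=
            mul_le_mul_of_nonneg_right hglex (sq_nonneg _)
        _ = (a₁ * (((η x : ℝ) + 1) / g (η x + 1)))
            * (rEnv g x (addo x η) x
              * (f (addo x (mv η x y)) - f (addo x η)) ^ 2) := by
            rw [hr, ← mul_assoc, hkey]
  · have hr : rEnv g o (addo o η) x = g (η x) := by
      rw [rEnv, if_neg hxo, addo_apply, if_neg hxo]
    have hmv : mv (addo o η) x y = addo o (mv η x y) :=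
      mv_addo o x y η hxy (fun h => absurd h hxo)
    rw [hmv, hr]
    have hnn : 0 ≤ g (η x) * (f (addo o (mv η x y)) - f (addo o η)) ^ 2 :=
      mul_nonneg (g_nonneg hg0 hgpos _) (sq_nonneg _)
    calc g (η x) * (f (addo o (mv η x y)) - f (addo o η)) ^ 2
        = 1 * (g (η x) * (f (addo o (mv η x y)) - f (addo o η)) ^ 2) := by ring
      _ ≤ (a₁ * (((η o : ℝ) + 1) / g (η o + 1)))
          * (g (η x) * (f (addo o (mv η x y)) - f (addo o η)) ^ 2) :=
          mul_le_mul_of_nonneg_right hC1 hnn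

lemma half_sum {ι : Type*} (s : Finset ι) (T S : ι → ℝ) (C : ℝ)
    (h : ∀ i ∈ s, T i ≤ C * S i) :
    (1 / 2 : ℝ) * ∑ i ∈ s, T i ≤ C * ((1 / 2 : ℝ) * ∑ i ∈ s, S i) := by
  have h2 : ∑ i ∈ s, T i ≤ C * ∑ i ∈ s, S i := by
    rw [Finset.mul_sum]; exact Finset.sum_le_sum h
  linarith

/-- per-configuration Dirichlet comparison. -/
lemma dloc_comp (ha₀ : 0 < a₀) (ha : a₀ ≤ a₁)
    (hg0 : g 0 = 0) (hgpos : ∀ m : ℕ, 1 ≤ m → 0 < g m)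
    (l j : ℕ)
    (hbound : ∀ m : ℕ, 1 ≤ m → m ≤ j →
      a₁⁻¹ ≤ (m : ℝ) / g m ∧ (m : ℝ) / g m ≤ j * a₀⁻¹)
    (o : Fin (2 * l + 1)) (η : Fin (2 * l + 1) → ℕ) (hηo : η o + 1 ≤ j)
    (f : (Fin (2 * l + 1) → ℕ) → ℝ) :
    dloc g l η (fun ρ => f (addo o ρ))
      ≤ (a₁ * (((η o : ℝ) + 1) / g (η o + 1))) * dlocEnv g l o (addo o η) f := by
  set C := a₁ * (((η o : ℝ) + 1) / g (η o + 1)) with hCdef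
  rw [dloc, dlocEnv]
  refine half_sum _ _ _ _ fun i _ => ?_
  rw [mul_add]
  refine add_le_add ?_ ?_
  · have h := half_comp ha₀ ha hg0 hgpos j hbound o η hηo (sA l i) (sB l i)
      (sAB_ne l i) f
    calc (1 / 2 : ℝ) * g (η (sA l i))
          * ((fun ρ => f (addo o ρ)) (mv η (sA l i) (sB l i))
            - (fun ρ => f (addo o ρ)) η) ^ 2
        = (1 / 2) * (g (η (sA l i))
            * (f (addo o (mv η (sA l i) (sB l i))) - f (addo o η)) ^ 2) := by
          ring
      _ ≤ (1 / 2) * (C * (rEnv g o (addo o η) (sA l i)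
            * (f (mv (addo o η) (sA l i) (sB l i)) - f (addo o η)) ^ 2)) :=
          mul_le_mul_of_nonneg_left h (by norm_num)
      _ = C * ((1 / 2) * rEnv g o (addo o η) (sA l i)
            * (f (mv (addo o η) (sA l i) (sB l i)) - f (addo o η)) ^ 2) := by
          ring
  · have h := half_comp ha₀ ha hg0 hgpos j hbound o η hηo (sB l i) (sA l i)
      (Ne.symm (sAB_ne l i)) f
    calc (1 / 2 : ℝ) * g (η (sB l i))
          * ((fun ρ => f (addo o ρ)) (mv η (sB l i) (sA l i))
            - (fun ρ => f (addo o ρ)) η) ^ 2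
        = (1 / 2) * (g (η (sB l i))
            * (f (addo o (mv η (sB l i) (sA l i))) - f (addo o η)) ^ 2) := by
          ring
      _ ≤ (1 / 2) * (C * (rEnv g o (addo o η) (sB l i)
            * (f (mv (addo o η) (sB l i) (sA l i)) - f (addo o η)) ^ 2)) :=
          mul_le_mul_of_nonneg_left h (by norm_num)
      _ = C * ((1 / 2) * rEnv g o (addo o η) (sB l i)
            * (f (mv (addo o η) (sB l i) (sA l i)) - f (addo o η)) ^ 2) := by
          ring

lemma dlocEnv_nonneg (hg0 : g 0 = 0) (hgpos : ∀ m : ℕ, 1 ≤ m → 0 < g m)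
    (l : ℕ) (o : Fin (2 * l + 1)) (η : Fin (2 * l + 1) → ℕ)
    (f : (Fin (2 * l + 1) → ℕ) → ℝ) :
    0 ≤ dlocEnv g l o (addo o η) f := by
  have hr : ∀ x, 0 ≤ rEnv g o (addo o η) x := by
    intro x
    rw [rEnv]
    split_ifs with h
    · subst h
      rw [addo_apply, if_pos rfl]
      have : (0 : ℝ) ≤ ((η x + 1 : ℕ) : ℝ) - 1 := by
        push_cast
        linarith [Nat.cast_nonneg (α := ℝ) (η x)]
      exact mul_nonneg (g_nonneg hg0 hgpos _) (div_nonneg this (by positivity))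
    · exact g_nonneg hg0 hgpos _
  rw [dlocEnv]
  refine mul_nonneg (by norm_num) (Finset.sum_nonneg fun i _ => ?_)
  exact add_nonneg
    (mul_nonneg (mul_nonneg (by norm_num) (hr _)) (sq_nonneg _))
    (mul_nonneg (mul_nonneg (by norm_num) (hr _)) (sq_nonneg _))

/-- Main lemma with an arbitrary tagged site. -/
lemma key_spec_gap (g : ℕ → ℝ) (a₀ a₁ : ℝ) (ha₀ : 0 < a₀) (ha : a₀ ≤ a₁)
    (hg0 : g 0 = 0) (hgpos : ∀ m : ℕ, 1 ≤ m → 0 < g m)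
    (l j : ℕ) (hj : 1 ≤ j)
    (hbound : ∀ m : ℕ, 1 ≤ m → m ≤ j →
      a₁⁻¹ ≤ (m : ℝ) / g m ∧ (m : ℝ) / g m ≤ j * a₀⁻¹)
    (W : ℝ) (hW0 : 0 ≤ W)
    (hW : ∀ f : (Fin (2 * l + 1) → ℕ) → ℝ,
      varMu g l (j - 1) f ≤ W * dirMu g l (j - 1) f)
    (o : Fin (2 * l + 1)) (f : (Fin (2 * l + 1) → ℕ) → ℝ) :
    varNu g l j o f ≤ (a₁ * a₀⁻¹ * j) ^ 2 * W * dirNu g l j o f := by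
  classical
  have ha₁ : 0 < a₁ := lt_of_lt_of_le ha₀ ha
  set B := Finset.Nat.antidiagonalTuple (2 * l + 1) (j - 1) with hBdef
  set F : (Fin (2 * l + 1) → ℕ) → ℝ := fun η => f (addo o η) with hFdef
  set vv : (Fin (2 * l + 1) → ℕ) → ℝ :=
    fun η => ((η o : ℝ) + 1) * cw g (addo o η) with hvdef
  have hmem : ∀ η ∈ B, η o + 1 ≤ j := by
    intro η hη
    have hs := Finset.Nat.mem_antidiagonalTuple.mp hη
    have h2 := Finset.single_le_sum (f := η) (fun i _ => Nat.zero_le _)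
      (Finset.mem_univ o)
    omega
  have hveq : ∀ η : Fin (2 * l + 1) → ℕ,
      vv η = (((η o : ℝ) + 1) / g (η o + 1)) * cw g η := by
    intro η
    show ((η o : ℝ) + 1) * cw g (addo o η) = _
    rw [cw_addo, div_eq_mul_inv]
    ring
  have hvlow : ∀ η ∈ B, a₁⁻¹ * cw g η ≤ vv η := by
    intro η hη
    rw [hveq]
    have hb := (hbound (η o + 1) (Nat.succ_le_succ (Nat.zero_le _)) (hmem η hη)).1
    push_cast at hb
    exact mul_le_mul_of_nonneg_right hb (cw_pos hgpos η).le
  have hvhigh : ∀ η ∈ B, vv η ≤ ((j : ℝ) * a₀⁻¹) * cw g η := by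
    intro η hη
    rw [hveq]
    have hb := (hbound (η o + 1) (Nat.succ_le_succ (Nat.zero_le _)) (hmem η hη)).2
    push_cast at hb
    exact mul_le_mul_of_nonneg_right hb (cw_pos hgpos η).le
  have hBne : B.Nonempty := by
    refine ⟨fun x => if x = o then j - 1 else 0, ?_⟩
    rw [hBdef, Finset.Nat.mem_antidiagonalTuple]
    simp [Finset.sum_ite_eq']
  have hZw : 0 < ∑ η ∈ B, cw g η :=
    Finset.sum_pos (fun η _ => cw_pos hgpos η) hBne
  have hZv : 0 < ∑ η ∈ B, vv η := by
    have hle : a₁⁻¹ * ∑ η ∈ B, cw g η ≤ ∑ η ∈ B, vv η := by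
      rw [Finset.mul_sum]; exact Finset.sum_le_sum hvlow
    have := mul_pos (inv_pos.mpr ha₁) hZw
    linarith
  -- transfer sums
  have hnum0 : ∑ η ∈ Finset.Nat.antidiagonalTuple (2 * l + 1) j,
      (η o : ℝ) * cw g η = ∑ η ∈ B, vv η := by
    have h := sum_palm g (2 * l + 1) j hj o (fun _ => (1 : ℝ))
    simpa using h
  have hnum1 : ∑ η ∈ Finset.Nat.antidiagonalTuple (2 * l + 1) j,
      (η o : ℝ) * cw g η * f η = ∑ η ∈ B, vv η * F η := by
    have h := sum_palm g (2 * l + 1) j hj o f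
    rw [h]
  have hnum2 : ∑ η ∈ Finset.Nat.antidiagonalTuple (2 * l + 1) j,
      (η o : ℝ) * cw g η * f η ^ 2 = ∑ η ∈ B, vv η * F η ^ 2 := by
    have h := sum_palm g (2 * l + 1) j hj o (fun η => f η ^ 2)
    rw [h]
  have hnumD : ∑ η ∈ Finset.Nat.antidiagonalTuple (2 * l + 1) j,
      (η o : ℝ) * cw g η * dlocEnv g l o η f
      = ∑ η ∈ B, vv η * dlocEnv g l o (addo o η) f := by
    have h := sum_palm g (2 * l + 1) j hj o (fun η => dlocEnv g l o η f)
    rw [h]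
  -- variance comparison
  have hvarNu : varNu g l j o f
      = (∑ η ∈ B, vv η * F η ^ 2) / (∑ η ∈ B, vv η)
        - ((∑ η ∈ B, vv η * F η) / (∑ η ∈ B, vv η)) ^ 2 := by
    rw [varNu, palmE, palmE, hnum0, hnum1, hnum2]
  have hvarMu : varMu g l (j - 1) F
      = (∑ η ∈ B, cw g η * F η ^ 2) / (∑ η ∈ B, cw g η)
        - ((∑ η ∈ B, cw g η * F η) / (∑ η ∈ B, cw g η)) ^ 2 := by
    rw [varMu, canE, canE]
  have hvar : varNu g l j o f ≤ (a₁ * a₀⁻¹ * j) * varMu g l (j - 1) F := by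
    rw [hvarNu, hvarMu]
    have h := var_comp B (cw g) vv F a₁⁻¹ ((j : ℝ) * a₀⁻¹)
      (inv_pos.mpr ha₁) (by positivity)
      (fun η _ => (cw_pos hgpos η).le) hvlow hvhigh hZw
    have heq : ((j : ℝ) * a₀⁻¹) / a₁⁻¹ = a₁ * a₀⁻¹ * j := by
      rw [div_eq_mul_inv, inv_inv]; ring
    rw [heq] at h
    exact h
  -- Dirichlet comparison
  have hdirMu : dirMu g l (j - 1) F
      = (∑ η ∈ B, cw g η * dloc g l η F) / (∑ η ∈ B, cw g η) := by
    rw [dirMu]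
  have hdirNu : dirNu g l j o f
      = (∑ η ∈ B, vv η * dlocEnv g l o (addo o η) f) / (∑ η ∈ B, vv η) := by
    rw [dirNu, hnumD, hnum0]
  have hNv0 : 0 ≤ ∑ η ∈ B, vv η * dlocEnv g l o (addo o η) f := by
    refine Finset.sum_nonneg fun η hη => mul_nonneg ?_ ?_
    · have := hvlow η hη
      have hcw := cw_pos hgpos η
      nlinarith [inv_pos.mpr ha₁]
    · exact dlocEnv_nonneg hg0 hgpos l o η f
  have hND : ∑ η ∈ B, cw g η * dloc g l η F
      ≤ a₁ * ∑ η ∈ B, vv η * dlocEnv g l o (addo o η) f := by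
    rw [Finset.mul_sum]
    refine Finset.sum_le_sum fun η hη => ?_
    have h := dloc_comp ha₀ ha hg0 hgpos l j hbound o η (hmem η hη) f
    have hcw := (cw_pos hgpos η).le
    calc cw g η * dloc g l η F
        ≤ cw g η * ((a₁ * (((η o : ℝ) + 1) / g (η o + 1)))
            * dlocEnv g l o (addo o η) f) :=
          mul_le_mul_of_nonneg_left h hcw
      _ = a₁ * (vv η * dlocEnv g l o (addo o η) f) := by
          rw [hveq η]; ring
  have hZvK : ∑ η ∈ B, vv η ≤ ((j : ℝ) * a₀⁻¹) * ∑ η ∈ B, cw g η := by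
    rw [Finset.mul_sum]
    exact Finset.sum_le_sum hvhigh
  have hdir : dirMu g l (j - 1) F ≤ (a₁ * a₀⁻¹ * j) * dirNu g l j o f := by
    rw [hdirMu, hdirNu, mul_div_assoc' _ _ (∑ η ∈ B, vv η)]
    rw [div_le_div_iff₀ hZw hZv]
    have e1 : (∑ η ∈ B, cw g η * dloc g l η F) * (∑ η ∈ B, vv η)
        ≤ (a₁ * ∑ η ∈ B, vv η * dlocEnv g l o (addo o η) f) * (∑ η ∈ B, vv η) :=
      mul_le_mul_of_nonneg_right hND hZv.le
    have e2 : (a₁ * ∑ η ∈ B, vv η * dlocEnv g l o (addo o η) f) * (∑ η ∈ B, vv η)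
        ≤ (a₁ * ∑ η ∈ B, vv η * dlocEnv g l o (addo o η) f)
          * (((j : ℝ) * a₀⁻¹) * ∑ η ∈ B, cw g η) :=
      mul_le_mul_of_nonneg_left hZvK (mul_nonneg ha₁.le hNv0)
    calc (∑ η ∈ B, cw g η * dloc g l η F) * (∑ η ∈ B, vv η)
        ≤ (a₁ * ∑ η ∈ B, vv η * dlocEnv g l o (addo o η) f)
          * (((j : ℝ) * a₀⁻¹) * ∑ η ∈ B, cw g η) := le_trans e1 e2
      _ = a₁ * a₀⁻¹ * (j : ℝ)
          * (∑ η ∈ B, vv η * dlocEnv g l o (addo o η) f) * (∑ η ∈ B, cw g η) := by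
          ring
  -- combine
  have hC0 : (0 : ℝ) ≤ a₁ * a₀⁻¹ * j := by positivity
  have h2 := hW F
  calc varNu g l j o f
      ≤ (a₁ * a₀⁻¹ * j) * varMu g l (j - 1) F := hvar
    _ ≤ (a₁ * a₀⁻¹ * j) * (W * dirMu g l (j - 1) F) :=
        mul_le_mul_of_nonneg_left h2 hC0
    _ ≤ (a₁ * a₀⁻¹ * j) * (W * ((a₁ * a₀⁻¹ * j) * dirNu g l j o f)) := by
        refine mul_le_mul_of_nonneg_left (mul_le_mul_of_nonneg_left hdir hW0) hC0
    _ = (a₁ * a₀⁻¹ * j) ^ 2 * W * dirNu g l j o f := by ring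

end SpecGapMain

/-- Lemma spec_gap0: if `a₁⁻¹ ≤ m/g(m) ≤ j a₀⁻¹` for
`1 ≤ m ≤ j`, and `W` is a Poincaré constant for the canonical measure with
`j−1` particles, then `(a₁ a₀⁻¹ j)² W` is a Poincaré constant for the Palm
canonical measure with `j` particles and the environment Dirichlet form;
i.e. `W^env(l,j) ≤ (a₁ a₀⁻¹ j)² W(l,j−1)`. -/
theorem stmt15 (g : ℕ → ℝ) (a₀ a₁ : ℝ) (ha₀ : 0 < a₀) (ha : a₀ ≤ a₁)
    (hg0 : g 0 = 0) (hgpos : ∀ m : ℕ, 1 ≤ m → 0 < g m)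
    (l j : ℕ) (hj : 1 ≤ j)
    (hbound : ∀ m : ℕ, 1 ≤ m → m ≤ j →
      a₁⁻¹ ≤ (m : ℝ) / g m ∧ (m : ℝ) / g m ≤ j * a₀⁻¹)
    (W : ℝ) (hW0 : 0 ≤ W)
    (hW : ∀ f : (Fin (2 * l + 1) → ℕ) → ℝ,
      varMu g l (j - 1) f ≤ W * dirMu g l (j - 1) f) :
    ∀ f : (Fin (2 * l + 1) → ℕ) → ℝ,
      varNu g l j ⟨l, by omega⟩ f
        ≤ (a₁ * a₀⁻¹ * j) ^ 2 * W * dirNu g l j ⟨l, by omega⟩ f :=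
  fun f => key_spec_gap g a₀ a₁ ha₀ ha hg0 hgpos l j hj hbound W hW0 hW _ f
end
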